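/- arXiv:0705.1364 — 2 statements merged into one kernel-verified Lean document; each statement's English description precedes it below -/
import Mathlib

section
/- Let n ≥ 1 be an integer, ε ∈ (0,1], h > 0, and θ ∈ [0, π/2), and set δ = ε·h·cos θ/(4n). Let H ⊆ ℝ be a finite set and let A = {j·δ : j ∈ ℤ} ∪ H. Let k be an integer with 0 ≤ k ≤ 2n − 1, and let p₀, p₁, …, p_k, p_{k+1} be points of ℝ³ whose heights are nonincreasing (height(p_i) ≥ height(p_{i+1}) for all 0 ≤ i ≤ k), with height(p₀) ∈ H. Suppose that for each i ∈ {1,…,k} there are points a_i, b_i ∈ ℝ³ with height(a_i) ∈ H, height(b_i) ∈ H, height(a_i) > height(b_i), height(a_i) − height(b_i) ≥ cos θ · ‖a_i − b_i‖, and p_i ∈ segment[a_i, b_i]. If Σ_{i=0}^{k} ‖p_i − p_{i+1}‖ ≥ h, then, writing p'₀ = p₀ and p'_{k+1} = p_{k+1}, there exist points p'₁, …, p'_k with p'_i ∈ segment[a_i, b_i] and height(p'_i) ∈ A for each i ∈ {1,…,k}, such that height(p'_i) ≥ height(p'_{i+1}) for all 0 ≤ i ≤ k, and Σ_{i=0}^{k}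 ‖p'_i − p'_{i+1}‖ < (1+ε) · Σ_{i=0}^{k} ‖p_i − p_{i+1}‖. -/
/-- The height of a point in ℝ³ is its third coordinate. -/
def height (p : EuclideanSpace ℝ (Fin 3)) : ℝ := p 2

noncomputable def snapUp (δ : ℝ) (F : Finset ℝ) (x : ℝ) : ℝ :=
  (insert ((⌈x / δ⌉ : ℝ) * δ) (F.filter (fun y => x ≤ y))).min'
    ⟨_, Finset.mem_insert_self _ _⟩

lemma ceil_mul_ge {δ x : ℝ} (hδ : 0 < δ) : x ≤ (⌈x / δ⌉ : ℝ) * δ := by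
  have h := mul_le_mul_of_nonneg_right (Int.le_ceil (x / δ)) hδ.le
  rwa [div_mul_cancel₀ _ (ne_of_gt hδ)] at h

lemma ceil_mul_lt {δ x : ℝ} (hδ : 0 < δ) : (⌈x / δ⌉ : ℝ) * δ < x + δ := by
  have h := mul_lt_mul_of_pos_right (Int.ceil_lt_add_one (x / δ)) hδ
  rwa [add_mul, div_mul_cancel₀ _ (ne_of_gt hδ), one_mul] at h

lemma snapUp_ge {δ : ℝ} (hδ : 0 < δ) (F : Finset ℝ) (x : ℝ) : x ≤ snapUp δ F x := by
  apply Finset.le_min'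
  intro y hy
  rcases Finset.mem_insert.mp hy with h | h
  · exact h ▸ ceil_mul_ge hδ
  · exact (Finset.mem_filter.mp h).2

lemma snapUp_mem {δ : ℝ} (F : Finset ℝ) (x : ℝ) :
    (∃ j : ℤ, snapUp δ F x = (j : ℝ) * δ) ∨ snapUp δ F x ∈ F := by
  have h := Finset.min'_mem (insert ((⌈x / δ⌉ : ℝ) * δ) (F.filter (fun y => x ≤ y)))
    ⟨_, Finset.mem_insert_self _ _⟩
  rcases Finset.mem_insert.mp h with h | h
  · exact Or.inl ⟨⌈x / δ⌉, h⟩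
  · exact Or.inr (Finset.mem_filter.mp h).1

lemma snapUp_le {δ : ℝ} (hδ : 0 < δ) (F : Finset ℝ) {x c : ℝ}
    (hc : (∃ j : ℤ, c = (j : ℝ) * δ) ∨ c ∈ F) (hxc : x ≤ c) : snapUp δ F x ≤ c := by
  rcases hc with ⟨j, rfl⟩ | h
  · refine le_trans (Finset.min'_le _ _ (Finset.mem_insert_self _ _)) ?_
    have hj : (⌈x / δ⌉ : ℤ) ≤ j := by
      rw [Int.ceil_le, div_le_iff₀ hδ]
      exact hxc
    exact mul_le_mul_of_nonneg_right (by exact_mod_cast hj) hδ.le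
  · exact Finset.min'_le _ _ (Finset.mem_insert_of_mem (Finset.mem_filter.mpr ⟨h, hxc⟩))

lemma snapUp_lt {δ : ℝ} (hδ : 0 < δ) (F : Finset ℝ) (x : ℝ) : snapUp δ F x < x + δ :=
  lt_of_le_of_lt (Finset.min'_le _ _ (Finset.mem_insert_self _ _)) (ceil_mul_lt hδ)

lemma final_arith (K N C e hh S : ℝ) (hK : K ≤ 2 * N - 1) (hC : C * (4 * N) = e * hh)
    (hC0 : 0 < C) (he : 0 < e) (hS : hh ≤ S) : 2 * (K * C) < e * S := by
  nlinarith [mul_nonneg (sub_nonneg.mpr hK) hC0.le, mul_le_mul_of_nonneg_left hS he.le]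

lemma height_combo (a b : EuclideanSpace ℝ (Fin 3)) (s t : ℝ) :
    height (s • a + t • b) = s * height a + t * height b := by
  simp [height]

set_option maxHeartbeats 1000000 in
theorem stmt_0 (n : ℕ) (hn : 1 ≤ n) (ε h θ : ℝ) (hε0 : 0 < ε) (hε1 : ε ≤ 1)
    (hh : 0 < h) (hθ0 : 0 ≤ θ) (hθ : θ < Real.pi / 2)
    (δ : ℝ) (hδ : δ = ε * h * Real.cos θ / (4 * n))
    (H : Set ℝ) (hH : H.Finite)
    (A : Set ℝ) (hA : A = {x : ℝ | ∃ j : ℤ, x = (j : ℝ) * δ} ∪ H)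
    (k : ℕ) (hk : k ≤ 2 * n - 1)
    (p : ℕ → EuclideanSpace ℝ (Fin 3))
    (hdesc : ∀ i, i ≤ k → height (p (i + 1)) ≤ height (p i))
    (hp0 : height (p 0) ∈ H)
    (a b : ℕ → EuclideanSpace ℝ (Fin 3))
    (haH : ∀ i, 1 ≤ i → i ≤ k → height (a i) ∈ H)
    (hbH : ∀ i, 1 ≤ i → i ≤ k → height (b i) ∈ H)
    (hab : ∀ i, 1 ≤ i → i ≤ k → height (b i) < height (a i))
    (hangle : ∀ i, 1 ≤ i → i ≤ k →
      Real.cos θ * ‖a i - b i‖ ≤ height (a i) - height (b i))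
    (hpseg : ∀ i, 1 ≤ i → i ≤ k → p i ∈ segment ℝ (a i) (b i))
    (hlen : h ≤ ∑ i ∈ Finset.range (k + 1), ‖p i - p (i + 1)‖) :
    ∃ p' : ℕ → EuclideanSpace ℝ (Fin 3),
      p' 0 = p 0 ∧ p' (k + 1) = p (k + 1) ∧
      (∀ i, 1 ≤ i → i ≤ k →
        p' i ∈ segment ℝ (a i) (b i) ∧ height (p' i) ∈ A) ∧
      (∀ i, i ≤ k → height (p' (i + 1)) ≤ height (p' i)) ∧
      ∑ i ∈ Finset.range (k + 1), ‖p' i - p' (i + 1)‖ <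
        (1 + ε) * ∑ i ∈ Finset.range (k + 1), ‖p i - p (i + 1)‖ := by
  classical
  have hcos : 0 < Real.cos θ :=
    Real.cos_pos_of_mem_Ioo ⟨by linarith [Real.pi_pos], hθ⟩
  have hn' : (1 : ℝ) ≤ n := by exact_mod_cast hn
  have hδpos : 0 < δ := by
    rw [hδ]
    apply div_pos (mul_pos (mul_pos hε0 hh) hcos)
    linarith
  set F : Finset ℝ := hH.toFinset with hF
  have hFA : ∀ c : ℝ, ((∃ j : ℤ, c = (j : ℝ) * δ) ∨ c ∈ F) ↔ c ∈ A := by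
    intro c
    rw [hA]
    simp [hF, Set.Finite.mem_toFinset]
  set s : ℝ → ℝ := snapUp δ F with hs
  -- membership of H heights in A-side condition
  have hmemH : ∀ c : ℝ, c ∈ H → (∃ j : ℤ, c = (j : ℝ) * δ) ∨ c ∈ F := by
    intro c hc
    exact Or.inr (hH.mem_toFinset.mpr hc)
  -- the moved points
  set t : ℕ → ℝ := fun i =>
    (height (a i) - s (height (p i))) / (height (a i) - height (b i)) with ht
  set p' : ℕ → EuclideanSpace ℝ (Fin 3) := fun i =>
    if 1 ≤ i ∧ i ≤ k then (1 - t i) • a i + t i • b i else p i with hp'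
  have hp'0 : p' 0 = p 0 := by simp [hp']
  have hp'k1 : p' (k + 1) = p (k + 1) := by simp [hp']
  -- key per-index facts
  have key : ∀ i, 1 ≤ i → i ≤ k →
      p' i ∈ segment ℝ (a i) (b i) ∧ height (p' i) = s (height (p i)) ∧
      ‖p' i - p i‖ ≤ δ / Real.cos θ := by
    intro i h1 h2
    obtain ⟨u, v, hu, hv, huv, hP⟩ := hpseg i h1 h2
    have hu' : u = 1 - v := by linarith
    have hΔ : 0 < height (a i) - height (b i) := sub_pos.mpr (hab i h1 h2)
    have hx : height (p i) = u * height (a i) + v * height (b i) := by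
      rw [← hP, height_combo]
    have hxa : height (p i) ≤ height (a i) := by
      have e : height (a i) - height (p i) = v * (height (a i) - height (b i)) := by
        rw [hx, hu']; ring
      linarith [mul_nonneg hv hΔ.le]
    have hxb : height (b i) ≤ height (p i) := by
      have e : height (p i) - height (b i) = u * (height (a i) - height (b i)) := by
        rw [hx, show v = 1 - u by linarith]; ring
      linarith [mul_nonneg hu hΔ.le]
    have hsge : height (p i) ≤ s (height (p i)) := snapUp_ge hδpos F _
    have hsa : s (height (p i)) ≤ height (a i) :=
      snapUp_le hδpos F (hmemH _ (haH i h1 h2)) hxa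
    have ht0 : 0 ≤ t i := div_nonneg (by linarith) hΔ.le
    have ht1 : t i ≤ 1 := by
      rw [ht]
      exact (div_le_one hΔ).mpr (by linarith)
    have hp'i : p' i = (1 - t i) • a i + t i • b i := by
      rw [hp']
      simp [h1, h2]
    have htΔ : t i * (height (a i) - height (b i)) = height (a i) - s (height (p i)) := by
      rw [ht]
      exact div_mul_cancel₀ _ hΔ.ne'
    refine ⟨?_, ?_, ?_⟩
    · exact ⟨1 - t i, t i, by linarith, ht0, by ring, hp'i.symm⟩
    · rw [hp'i, height_combo]
      linear_combination -htΔ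
    · -- distance bound
      have hdiff : p' i - p i = (v - t i) • (a i - b i) := by
        rw [hp'i, ← hP, hu']
        simp only [sub_smul, one_smul, smul_sub]
        abel
      have hvΔ : v * (height (a i) - height (b i)) = height (a i) - height (p i) := by
        rw [hx, hu']; ring
      have hvtΔ : (v - t i) * (height (a i) - height (b i)) =
          s (height (p i)) - height (p i) := by linear_combination hvΔ - htΔ
      have hvt : 0 ≤ v - t i := by nlinarith [hvtΔ, hsge, hΔ]
      have hnab : ‖a i - b i‖ ≤ (height (a i) - height (b i)) / Real.cos θ := by
        rw [le_div_iff₀ hcos]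
        linarith [hangle i h1 h2, mul_comm (Real.cos θ) ‖a i - b i‖]
      have hslt : s (height (p i)) < height (p i) + δ := snapUp_lt hδpos F _
      have : ‖p' i - p i‖ = (v - t i) * ‖a i - b i‖ := by
        rw [hdiff, norm_smul, Real.norm_eq_abs, abs_of_nonneg hvt]
      rw [this]
      have h1' : (v - t i) * ‖a i - b i‖ ≤
          (v - t i) * ((height (a i) - height (b i)) / Real.cos θ) :=
        mul_le_mul_of_nonneg_left hnab hvt
      have h2' : (v - t i) * ((height (a i) - height (b i)) / Real.cos θ) ≤ δ / Real.cos θ := by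
        rw [← mul_div_assoc, hvtΔ]
        gcongr
        linarith
      linarith
  -- heights descend
  have hdesc' : ∀ i, i ≤ k → height (p' (i + 1)) ≤ height (p' i) := by
    intro i hi
    rcases Nat.eq_zero_or_pos i with rfl | hi1
    · -- i = 0
      rcases Nat.eq_zero_or_pos k with rfl | hk1
      · rw [hp'0]
        have : p' 1 = p 1 := by rw [hp']; simp
        rw [this]
        exact hdesc 0 le_rfl
      · rw [hp'0]
        have h11 : (1:ℕ) ≤ k := hk1
        have := (key 1 le_rfl h11).2.1
        rw [this]
        exact snapUp_le hδpos F (hmemH _ hp0) (hdesc 0 hi)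
    · rcases lt_or_eq_of_le hi with hlt | heq
      · -- 1 ≤ i, i+1 ≤ k
        have hik : i ≤ k := hi
        have hik1 : i + 1 ≤ k := hlt
        rw [(key i hi1 hik).2.1, (key (i+1) (by omega) hik1).2.1]
        apply snapUp_le hδpos F
        · rcases snapUp_mem F (height (p i)) with hm | hm
          · exact Or.inl hm
          · exact Or.inr hm
        · exact le_trans (hdesc i hik) (snapUp_ge hδpos F _)
      · -- i = k ≥ 1
        rw [heq, hp'k1, (key k (heq ▸ hi1) le_rfl).2.1]
        exact le_trans (hdesc k le_rfl) (snapUp_ge hδpos F _)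
  -- length bound
  set D : ℕ → ℝ := fun i => ‖p' i - p i‖ with hD
  have hD0 : D 0 = 0 := by simp [hD, hp'0]
  have hDk1 : D (k + 1) = 0 := by simp [hD, hp'k1]
  have hDb : ∀ i, i < k → D (i + 1) ≤ δ / Real.cos θ := by
    intro i hi
    exact (key (i + 1) (by omega) hi).2.2
  have htri : ∀ i, ‖p' i - p' (i + 1)‖ ≤ D i + ‖p i - p (i + 1)‖ + D (i + 1) := by
    intro i
    have : p' i - p' (i + 1) = (p' i - p i) + (p i - p (i + 1)) + (p (i + 1) - p' (i + 1)) := by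
      abel
    rw [this]
    calc ‖(p' i - p i) + (p i - p (i+1)) + (p (i+1) - p' (i+1))‖
        ≤ ‖(p' i - p i) + (p i - p (i+1))‖ + ‖p (i+1) - p' (i+1)‖ := norm_add_le _ _
      _ ≤ ‖p' i - p i‖ + ‖p i - p (i+1)‖ + ‖p (i+1) - p' (i+1)‖ := by
          linarith [norm_add_le (p' i - p i) (p i - p (i+1))]
      _ = D i + ‖p i - p (i+1)‖ + D (i+1) := by rw [hD, norm_sub_rev (p (i+1))]
  have hsum1 : ∑ i ∈ Finset.range (k + 1), D i ≤ k * (δ / Real.cos θ) := by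
    rw [Finset.sum_range_succ']
    rw [hD0, add_zero]
    calc ∑ i ∈ Finset.range k, D (i + 1) ≤ ∑ i ∈ Finset.range k, (δ / Real.cos θ) :=
          Finset.sum_le_sum fun i hi => hDb i (Finset.mem_range.mp hi)
      _ = k * (δ / Real.cos θ) := by rw [Finset.sum_const, Finset.card_range, nsmul_eq_mul]
  have hsum2 : ∑ i ∈ Finset.range (k + 1), D (i + 1) ≤ k * (δ / Real.cos θ) := by
    rw [Finset.sum_range_succ, hDk1, add_zero]
    calc ∑ i ∈ Finset.range k, D (i + 1) ≤ ∑ i ∈ Finset.range k, (δ / Real.cos θ) :=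
          Finset.sum_le_sum fun i hi => hDb i (Finset.mem_range.mp hi)
      _ = k * (δ / Real.cos θ) := by rw [Finset.sum_const, Finset.card_range, nsmul_eq_mul]
  have hsumtot : ∑ i ∈ Finset.range (k + 1), ‖p' i - p' (i + 1)‖ ≤
      ∑ i ∈ Finset.range (k + 1), ‖p i - p (i + 1)‖ + 2 * (k * (δ / Real.cos θ)) := by
    calc ∑ i ∈ Finset.range (k + 1), ‖p' i - p' (i + 1)‖
        ≤ ∑ i ∈ Finset.range (k + 1), (D i + ‖p i - p (i + 1)‖ + D (i + 1)) :=
          Finset.sum_le_sum fun i _ => htri i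
      _ = (∑ i ∈ Finset.range (k + 1), D i) + (∑ i ∈ Finset.range (k + 1), ‖p i - p (i+1)‖)
            + ∑ i ∈ Finset.range (k + 1), D (i + 1) := by
          rw [Finset.sum_add_distrib, Finset.sum_add_distrib]
      _ ≤ ∑ i ∈ Finset.range (k + 1), ‖p i - p (i + 1)‖ + 2 * (k * (δ / Real.cos θ)) := by
          linarith [hsum1, hsum2]
  -- final arithmetic
  have hk' : (k : ℝ) ≤ 2 * n - 1 := by
    have h2n : 1 ≤ 2 * n := by omega
    have := (Nat.cast_le (α := ℝ)).mpr hk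
    rwa [Nat.cast_sub h2n, Nat.cast_mul, Nat.cast_ofNat, Nat.cast_one] at this
  have hCval : (δ / Real.cos θ) * (4 * n) = ε * h := by
    rw [hδ]
    field_simp
  have hC0 : 0 < δ / Real.cos θ := div_pos hδpos hcos
  set Stot : ℝ := ∑ i ∈ Finset.range (k + 1), ‖p i - p (i + 1)‖ with hStot
  have hfin : 2 * ((k : ℝ) * (δ / Real.cos θ)) < ε * Stot :=
    final_arith k n (δ / Real.cos θ) ε h Stot hk' hCval hC0 hε0 hlen
  refine ⟨p', hp'0, hp'k1, ?_, hdesc', ?_⟩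
  · intro i h1 h2
    refine ⟨(key i h1 h2).1, ?_⟩
    rw [(key i h1 h2).2.1]
    exact (hFA _).mp (snapUp_mem F _)
  · linarith [hsumtot, hfin]
end

section
/- Let δ > 0 and θ ∈ [0, π/2). Let H ⊆ ℝ be a finite set and let A = {j·δ : j ∈ ℤ} ∪ H. Let k ≥ 1 and, for each i ∈ {1,…,k}, let a_i, b_i ∈ ℝ³ with height(a_i) ∈ H, height(b_i) ∈ H, height(a_i) > height(b_i), and height(a_i) − height(b_i) ≥ cos θ · ‖a_i − b_i‖. Let p_i ∈ segment[a_i, b_i] for each i, with height(p₁) ≥ height(p₂) ≥ … ≥ height(p_k). Then there exist points p'₁, …, p'_k with: p'_i ∈ segment[a_i, b_i]; height(p'_i) ∈ A; height(p_i) ≤ height(p'_i); height(p'₁) ≥ height(p'₂) ≥ … ≥ height(p'_k); and ‖p_i − p'_i‖ ≤ δ/cos θ for every i. -/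
theorem stmt_5 (δ θ : ℝ) (hδ : 0 < δ) (hθ0 : 0 ≤ θ) (hθ : θ < Real.pi / 2)
    (H : Set ℝ) (hH : H.Finite)
    (A : Set ℝ) (hA : A = {x : ℝ | ∃ j : ℤ, x = (j : ℝ) * δ} ∪ H)
    (k : ℕ) (hk : 1 ≤ k)
    (a b : ℕ → EuclideanSpace ℝ (Fin 3))
    (haH : ∀ i, 1 ≤ i → i ≤ k → height (a i) ∈ H)
    (hbH : ∀ i, 1 ≤ i → i ≤ k → height (b i) ∈ H)
    (hab : ∀ i, 1 ≤ i → i ≤ k → height (b i) < height (a i))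
    (hangle : ∀ i, 1 ≤ i → i ≤ k →
      Real.cos θ * ‖a i - b i‖ ≤ height (a i) - height (b i))
    (p : ℕ → EuclideanSpace ℝ (Fin 3))
    (hp : ∀ i, 1 ≤ i → i ≤ k → p i ∈ segment ℝ (a i) (b i))
    (hdesc : ∀ i, 1 ≤ i → i ≤ k - 1 → height (p (i + 1)) ≤ height (p i)) :
    ∃ p' : ℕ → EuclideanSpace ℝ (Fin 3),
      (∀ i, 1 ≤ i → i ≤ k →
        p' i ∈ segment ℝ (a i) (b i) ∧
        height (p' i) ∈ A ∧
        height (p i) ≤ height (p' i) ∧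
        ‖p i - p' i‖ ≤ δ / Real.cos θ) ∧
      (∀ i, 1 ≤ i → i ≤ k - 1 → height (p' (i + 1)) ≤ height (p' i)) := by
  have hC : 0 < Real.cos θ := Real.cos_pos_of_mem_Ioo ⟨by linarith [Real.pi_pos], hθ⟩
  -- candidate snapped height at index i
  set c : ℕ → ℝ := fun i => min (δ * ⌈height (p i) / δ⌉) (height (a i)) with hcdef
  -- running minimum to ensure monotonicity
  set h' : ℕ → ℝ := fun n => Nat.rec (c 1) (fun n ih => min (c (n+1)) ih) n with hh'def
  have hh'succ : ∀ n, h' (n+1) = min (c (n+1)) (h' n) := fun n => rfl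
  have hh'zero : h' 0 = c 1 := rfl
  -- height bounds for points on segments
  have hseg : ∀ i, 1 ≤ i → i ≤ k →
      height (b i) ≤ height (p i) ∧ height (p i) ≤ height (a i) := by
    intro i h1 h2
    obtain ⟨u, v, hu, hv, huv, hpe⟩ := hp i h1 h2
    have he : height (p i) = u * height (a i) + v * height (b i) := by
      rw [← hpe]; simp [height]
    have hba := (hab i h1 h2).le
    have e1 : height (p i) - height (b i) = u * (height (a i) - height (b i)) := by
      linear_combination he + height (b i) * huv
    have e2 : height (a i) - height (p i) = v * (height (a i) - height (b i)) := by
      linear_combination -he - height (a i) * huv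
    have f1 := mul_nonneg hu (sub_nonneg.mpr hba)
    have f2 := mul_nonneg hv (sub_nonneg.mpr hba)
    constructor <;> linarith
  -- ceiling bounds
  have hceil₁ : ∀ i, height (p i) ≤ δ * ⌈height (p i) / δ⌉ := by
    intro i
    have := Int.le_ceil (height (p i) / δ)
    have := (div_le_iff₀ hδ).mp this
    linarith [this]
  have hceil₂ : ∀ i, δ * ⌈height (p i) / δ⌉ ≤ height (p i) + δ := by
    intro i
    have h1 := Int.ceil_lt_add_one (height (p i) / δ)
    have h2 : δ * (⌈height (p i) / δ⌉ : ℝ) ≤ δ * (height (p i) / δ + 1) :=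
      mul_le_mul_of_nonneg_left h1.le hδ.le
    have h3 : δ * (height (p i) / δ + 1) = height (p i) + δ := by
      field_simp
    linarith
  -- c facts
  have hcge : ∀ i, 1 ≤ i → i ≤ k → height (p i) ≤ c i := by
    intro i h1 h2
    exact le_min (hceil₁ i) (hseg i h1 h2).2
  have hcA : ∀ i, 1 ≤ i → i ≤ k → c i ∈ A := by
    intro i h1 h2
    rcases min_cases (δ * ⌈height (p i) / δ⌉) (height (a i)) with ⟨he, _⟩ | ⟨he, _⟩
    · rw [hA]; left; exact ⟨⌈height (p i) / δ⌉, by rw [hcdef]; simp [he, mul_comm]⟩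
    · rw [hA]; right; rw [hcdef]; simpa [he] using haH i h1 h2
  -- h' facts
  have hh'A : ∀ n, n ≤ k → h' n ∈ A := by
    intro n hn
    induction n with
    | zero => rw [hh'zero]; exact hcA 1 le_rfl hk
    | succ m ih =>
      rw [hh'succ]
      rcases min_cases (c (m+1)) (h' m) with ⟨he, _⟩ | ⟨he, _⟩
      · rw [he]; exact hcA (m+1) (Nat.succ_le_succ (Nat.zero_le m)) hn
      · rw [he]; exact ih (le_trans (Nat.le_succ m) hn)
  have hh'ge : ∀ n, 1 ≤ n → n ≤ k → height (p n) ≤ h' n := by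
    intro n h1 h2
    induction n with
    | zero => omega
    | succ m ih =>
      rw [hh'succ]
      rcases Nat.eq_zero_or_pos m with hm | hm
      · subst hm
        rw [hh'zero]
        exact le_min (hcge 1 le_rfl h2) (hcge 1 le_rfl h2)
      · have hmk : m ≤ k := le_trans (Nat.le_succ m) h2
        have hdm : height (p (m+1)) ≤ height (p m) := hdesc m hm (by omega)
        have := ih hm hmk
        exact le_min (hcge (m+1) (by omega) h2) (le_trans hdm this)
  have hh'le : ∀ n, 1 ≤ n → h' n ≤ c n := by
    intro n h1
    cases n with
    | zero => omega
    | succ m => rw [hh'succ]; exact min_le_left _ _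
  -- define p'
  set p' : ℕ → EuclideanSpace ℝ (Fin 3) := fun i =>
    ((h' i - height (b i)) / (height (a i) - height (b i))) • a i +
    (1 - (h' i - height (b i)) / (height (a i) - height (b i))) • b i with hp'def
  have hheight : ∀ i, 1 ≤ i → i ≤ k → height (p' i) = h' i := by
    intro i h1 h2
    have hba := hab i h1 h2
    have hd : (0:ℝ) < height (a i) - height (b i) := by linarith
    rw [hp'def]
    simp only [height, PiLp.add_apply, PiLp.smul_apply, smul_eq_mul]
    set t : ℝ := (h' i - height (b i)) / (height (a i) - height (b i)) with htdef
    show t * (a i) 2 + (1 - t) * (b i) 2 = h' i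
    have : t * (height (a i) - height (b i)) = h' i - height (b i) := by
      rw [htdef, div_mul_cancel₀]; exact hd.ne'
    simp only [height] at this ⊢
    linarith
  refine ⟨p', ?_, ?_⟩
  · intro i h1 h2
    have hba := hab i h1 h2
    have hd : (0:ℝ) < height (a i) - height (b i) := by linarith
    have hpge := hh'ge i h1 h2
    have hple : h' i ≤ height (a i) := le_trans (hh'le i h1) (min_le_right _ _)
    have hpb : height (b i) ≤ h' i := le_trans (hseg i h1 h2).1 hpge
    set t : ℝ := (h' i - height (b i)) / (height (a i) - height (b i)) with htdef
    have ht0 : 0 ≤ t := div_nonneg (by linarith) hd.le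
    have ht1 : t ≤ 1 := by
      rw [htdef, div_le_one hd]; linarith
    refine ⟨⟨t, 1 - t, ht0, by linarith, by ring, rfl⟩, ?_, ?_, ?_⟩
    · rw [hheight i h1 h2]; exact hh'A i h2
    · rw [hheight i h1 h2]; exact hpge
    · -- norm bound
      obtain ⟨u, v, hu, hv, huv, hpe⟩ := hp i h1 h2
      have hv' : v = 1 - u := by linarith
      have he : height (p i) = u * height (a i) + v * height (b i) := by
        rw [← hpe]; simp [height]
      have hueq : u = (height (p i) - height (b i)) / (height (a i) - height (b i)) := by
        rw [hv'] at he
        rw [eq_div_iff hd.ne']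
        linear_combination -he
      have hdiff : p i - p' i = (u - t) • (a i - b i) := by
        rw [← hpe, hp'def, hv']
        show u • a i + (1-u) • b i - (t • a i + (1 - t) • b i) = (u - t) • (a i - b i)
        module
      have hnorm : ‖p i - p' i‖ = |u - t| * ‖a i - b i‖ := by
        rw [hdiff, norm_smul, Real.norm_eq_abs]
      have hut : |u - t| = (h' i - height (p i)) / (height (a i) - height (b i)) := by
        rw [hueq, htdef, div_sub_div_same, abs_div, abs_of_pos hd]
        congr 1
        rw [abs_of_nonpos (by linarith)]
        ring
      have hbound : h' i - height (p i) ≤ δ := by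
        have := le_trans (hh'le i h1) (min_le_left _ _)
        have := hceil₂ i
        linarith
      rw [hnorm, hut]
      have hang := hangle i h1 h2
      have hn : 0 ≤ ‖a i - b i‖ := norm_nonneg _
      rw [div_mul_eq_mul_div, div_le_div_iff₀ hd hC]
      nlinarith [hpge]
  · intro i h1 h2
    have h2' : i + 1 ≤ k := by omega
    rw [hheight (i+1) (by omega) h2', hheight i h1 (by omega), hh'succ]
    exact min_le_right _ _
end
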